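/- Let α > −1 and let a_0, a_1, …, a_κ be real numbers satisfying the cut Laguerre recursion a_{j−1} − (2j+α+1−x)·a_j + (j+1)(j+α+1)·a_{j+1} = 0 for 0 ≤ j ≤ κ, with the conventions a_{−1} = 0 and a_{κ+1} = 0. Then a_j = a_0·Γ(α+1)·L_j^α(x) for all 0 ≤ j ≤ κ, and a nonzero solution exists if and only if L_{κ+1}^α(x) = 0, where L_n^α is the rescaled Laguerre polynomial 𝓛_n^α/Γ(n+α+1). -/

import Mathlib

open Real Finset

/-- Generalized Laguerre polynomial `𝓛_n^α(x)`. -/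
noncomputable def glag (α : ℝ) (n : ℕ) (x : ℝ) : ℝ :=
  ∑ k ∈ Finset.range (n + 1),
    (-1 : ℝ) ^ k * Real.Gamma ((n : ℝ) + α + 1) /
      (Real.Gamma ((k : ℝ) + α + 1) * (Nat.factorial (n - k) : ℝ) * (Nat.factorial k : ℝ)) * x ^ k

/-- Rescaled (Sonine) Laguerre polynomial `L_n^α(x) = 𝓛_n^α(x)/Γ(n+α+1)`. -/
noncomputable def slag (α : ℝ) (n : ℕ) (x : ℝ) : ℝ :=
  glag α n x / Real.Gamma ((n : ℝ) + α + 1)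

/-- Rescaled Laguerre polynomial with integer index, zero for negative index. -/
noncomputable def slagZ (α : ℝ) (m : ℤ) (x : ℝ) : ℝ :=
  if 0 ≤ m then slag α m.toNat x else 0

/-- The cut Laguerre recursion of order κ: the three-term relation holds for 0 ≤ j ≤ κ,
with the boundary conventions a₋₁ = 0 (built into the j = 0 equation) and a_{κ+1} = 0. -/
def CutRec (α x : ℝ) (κ : ℕ) (a : ℕ → ℝ) : Prop :=
  (-(α + 1 - x) * a 0 + (α + 1) * a 1 = 0) ∧
  (∀ j : ℕ, 1 ≤ j → j ≤ κ →
    a (j - 1) - (2 * (j : ℝ) + α + 1 - x) * a j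
      + ((j : ℝ) + 1) * ((j : ℝ) + α + 1) * a (j + 1) = 0) ∧
  a (κ + 1) = 0

noncomputable def lagT (α x : ℝ) (m k : ℕ) : ℝ :=
  (-1:ℝ)^k * x^k / (Real.Gamma ((k:ℝ)+α+1) * ((m-k).factorial : ℝ) * (k.factorial : ℝ))

lemma gamma_pos (α : ℝ) (hα : α > -1) (n : ℕ) : 0 < Real.Gamma ((n:ℝ) + α + 1) := by
  apply Real.Gamma_pos_of_pos; nlinarith [Nat.cast_nonneg (α := ℝ) n]

lemma fact_cast_succ (m : ℕ) : ((m+1).factorial : ℝ) = ((m:ℝ)+1) * (m.factorial : ℝ) := by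
  rw [Nat.factorial_succ]; push_cast; ring

lemma slag_eq_sum (α : ℝ) (hα : α > -1) (n : ℕ) (x : ℝ) :
    slag α n x = ∑ k ∈ Finset.range (n + 1), lagT α x n k := by
  rw [slag, glag, Finset.sum_div]
  refine Finset.sum_congr rfl fun k hk => ?_
  have h1 := (gamma_pos α hα n).ne'
  have h2 := (gamma_pos α hα k).ne'
  have h3 : (Nat.factorial (n - k) : ℝ) ≠ 0 := Nat.cast_ne_zero.mpr (Nat.factorial_ne_zero _)
  have h4 : (Nat.factorial k : ℝ) ≠ 0 := Nat.cast_ne_zero.mpr (Nat.factorial_ne_zero _)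
  rw [lagT]
  field_simp

set_option maxHeartbeats 1000000 in
lemma slag_rec (α : ℝ) (hα : α > -1) (n : ℕ) (x : ℝ) :
    slag α n x - (2*((n:ℝ)+1)+α+1-x) * slag α (n+1) x
      + (((n:ℝ)+1)+1)*(((n:ℝ)+1)+α+1) * slag α (n+2) x = 0 := by
  have hGk : ∀ k : ℕ, Real.Gamma ((k:ℝ)+α+1) ≠ 0 := fun k => (gamma_pos α hα k).ne'
  have hGk1 : ∀ k : ℕ, (k:ℝ)+α+1 ≠ 0 := fun k => by
    have := Nat.cast_nonneg (α := ℝ) k; nlinarith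
  have hfac : ∀ m : ℕ, (Nat.factorial m : ℝ) ≠ 0 :=
    fun m => Nat.cast_ne_zero.mpr (Nat.factorial_ne_zero _)
  have hA : ∑ k ∈ Finset.range (n+3), (if k ≤ n then lagT α x n k else 0) = slag α n x := by
    rw [slag_eq_sum α hα]
    rw [← Finset.sum_subset (Finset.range_subset_range.mpr (by omega : n+1 ≤ n+3))
      (fun k _ hk => if_neg (by simp at hk ⊢; omega))]
    exact Finset.sum_congr rfl fun k hk => if_pos (by simp at hk; omega)
  have hB : ∑ k ∈ Finset.range (n+3), (if k ≤ n+1 then lagT α x (n+1) k else 0)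
      = slag α (n+1) x := by
    rw [slag_eq_sum α hα]
    rw [← Finset.sum_subset (Finset.range_subset_range.mpr (by omega : n+2 ≤ n+3))
      (fun k _ hk => if_neg (by simp at hk ⊢; omega))]
    exact Finset.sum_congr rfl fun k hk => if_pos (by simp at hk; omega)
  have hC : ∑ k ∈ Finset.range (n+3), (if k = 0 then 0 else x * lagT α x (n+1) (k-1))
      = x * slag α (n+1) x := by
    rw [Finset.sum_range_succ' (fun k => if k = 0 then 0 else x * lagT α x (n+1) (k-1)) (n+2)]
    have h1 : ∀ k ∈ Finset.range (n+2),
        (if k+1 = 0 then (0:ℝ) else x * lagT α x (n+1) (k+1-1)) = x * lagT α x (n+1) k :=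
      fun k _ => by simp
    rw [Finset.sum_congr rfl h1, if_pos rfl, add_zero, slag_eq_sum α hα, Finset.mul_sum]
  have hD : ∑ k ∈ Finset.range (n+3), lagT α x (n+2) k = slag α (n+2) x :=
    (slag_eq_sum α hα (n+2) x).symm
  have key : ∀ k ∈ Finset.range (n+3),
      (if k ≤ n then lagT α x n k else 0)
      + (-(2*(n:ℝ)+α+3)) * (if k ≤ n+1 then lagT α x (n+1) k else 0)
      + (if k = 0 then 0 else x * lagT α x (n+1) (k-1))
      + ((n:ℝ)+2)*((n:ℝ)+α+2) * lagT α x (n+2) k = 0 := by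
    intro k hk
    rw [Finset.mem_range] at hk
    match k with
    | 0 =>
      simp only [if_pos (Nat.zero_le n), if_pos (Nat.zero_le (n+1)), if_pos rfl, lagT,
        pow_zero, Nat.sub_zero, Nat.factorial_zero, Nat.cast_zero, zero_add, Nat.cast_one]
      rw [fact_cast_succ (n+1), fact_cast_succ n]
      have h1 : Real.Gamma (α+1) ≠ 0 := by
        have := hGk 0; rw [Nat.cast_zero, zero_add] at this; exact this
      have h2 := hfac n
      have h5 : (n:ℝ)+1 ≠ 0 := by positivity
      have h6 : (n:ℝ)+2 ≠ 0 := by positivity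
      push_cast
      field_simp
      ring
    | (j+1) =>
      have hx1 : (if (j+1:ℕ) = 0 then (0:ℝ) else x * lagT α x (n+1) ((j+1)-1))
          = x * lagT α x (n+1) j := by simp
      rw [hx1]
      have hGam : Real.Gamma ((j:ℝ)+1+α+1) = ((j:ℝ)+α+1) * Real.Gamma ((j:ℝ)+α+1) := by
        rw [show (j:ℝ)+1+α+1 = ((j:ℝ)+α+1)+1 by ring, Real.Gamma_add_one (hGk1 j)]
      have h2 := hfac j
      have h4 := hGk j
      have h5 : (j:ℝ)+1 ≠ 0 := by positivity
      have h8 : (j:ℝ)+α+1 ≠ 0 := hGk1 j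
      rcases le_or_gt (j+1) n with hle | hgt
      · -- general case: j+1 ≤ n
        obtain ⟨m, rfl⟩ : ∃ m, n = j+1+m := ⟨n-(j+1), by omega⟩
        rw [if_pos hle, if_pos (by omega : j+1 ≤ j+1+m+1)]
        simp only [lagT, show j+1+m-(j+1) = m from by omega,
          show j+1+m+1-(j+1) = m+1 from by omega,
          show j+1+m+2-(j+1) = m+2 from by omega,
          show j+1+m+1-j = m+2 from by omega]
        rw [fact_cast_succ j, fact_cast_succ m, fact_cast_succ (m+1)]
        simp only [pow_succ]
        push_cast
        rw [hGam, fact_cast_succ m]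
        have h3 := hfac m
        have h6 : (m:ℝ)+1 ≠ 0 := by positivity
        have h7 : (m:ℝ)+2 ≠ 0 := by positivity
        field_simp
        ring
      · rcases (by omega : j = n ∨ j = n+1) with rfl | rfl
        · -- k = n+1
          rw [if_neg (by omega), if_pos (by omega)]
          simp only [lagT, show j+1-(j+1) = 0 from by omega, show j+2-(j+1) = 1 from by omega,
            show j+1-j = 1 from by omega, Nat.factorial_one, Nat.factorial_zero, Nat.cast_one]
          rw [fact_cast_succ j]
          simp only [pow_succ]
          push_cast
          rw [hGam]
          field_simp
          ring
        · -- k = n+2, j = n+1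
          rw [if_neg (by omega), if_neg (by omega)]
          simp only [lagT, show n+2-(n+1+1) = 0 from by omega, show n+1-(n+1) = 0 from by omega,
            Nat.factorial_zero, Nat.cast_one]
          rw [fact_cast_succ (n+1)]
          simp only [pow_succ]
          push_cast at hGam h2 h4 h5 h8 ⊢
          rw [hGam]
          have h9 : ((n:ℕ).factorial : ℝ) ≠ 0 := hfac n
          field_simp
          ring
  have hsum := Finset.sum_eq_zero key
  rw [Finset.sum_add_distrib, Finset.sum_add_distrib, Finset.sum_add_distrib,
    ← Finset.mul_sum, ← Finset.mul_sum, hA, hB, hC, hD] at hsum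
  push_cast
  linarith [hsum]

lemma slag_zero (α : ℝ) (hα : α > -1) (x : ℝ) : slag α 0 x = 1 / Real.Gamma (α+1) := by
  rw [slag_eq_sum α hα 0 x]
  simp [lagT]

lemma slag_rec_zero (α : ℝ) (hα : α > -1) (x : ℝ) :
    -(α+1-x) * slag α 0 x + (α+1) * slag α 1 x = 0 := by
  have hα1 : α + 1 ≠ 0 := by linarith
  have hG : Real.Gamma (α+1) ≠ 0 := by
    have := (gamma_pos α hα 0).ne'; rw [Nat.cast_zero, zero_add] at this; exact this
  rw [slag_eq_sum α hα 1 x, slag_zero α hα x]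
  rw [Finset.sum_range_succ, Finset.sum_range_succ, Finset.sum_range_zero]
  simp only [lagT, pow_zero, pow_one, Nat.factorial_zero, Nat.factorial_one, Nat.cast_zero,
    Nat.cast_one, zero_add, Nat.sub_zero, Nat.sub_self]
  rw [show (1:ℝ)+α+1 = (α+1)+1 by ring, Real.Gamma_add_one hα1]
  field_simp
  ring


/-- Any solution of the cut Laguerre recursion is a₀·Γ(α+1)·L_j^α(x), and a nonzero solution
exists if and only if L_{κ+1}^α(x) = 0. -/
theorem cut_laguerre_recursion_solution (α x : ℝ) (hα : α > -1) (κ : ℕ) :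
    (∀ a : ℕ → ℝ, CutRec α x κ a →
      (∀ j ≤ κ, a j = a 0 * Real.Gamma (α + 1) * slag α j x) ∧
      ((∃ j ≤ κ, a j ≠ 0) → slag α (κ + 1) x = 0)) ∧
    (slag α (κ + 1) x = 0 →
      ∃ a : ℕ → ℝ, CutRec α x κ a ∧ ∃ j ≤ κ, a j ≠ 0) := by
  have hα1 : α + 1 ≠ 0 := by linarith
  have hG : Real.Gamma (α+1) ≠ 0 := by
    have := (gamma_pos α hα 0).ne'; rw [Nat.cast_zero, zero_add] at this; exact this
  have hΓ0 : Real.Gamma (α+1) * slag α 0 x = 1 := by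
    rw [slag_zero α hα x]; field_simp
  constructor
  · intro a ha
    obtain ⟨h0, hrec, hend⟩ := ha
    set b : ℕ → ℝ := fun j => a 0 * Real.Gamma (α+1) * slag α j x with hb
    have hall : ∀ j, j ≤ κ + 1 → a j = b j := by
      intro j
      induction j using Nat.twoStepInduction with
      | zero =>
        intro _
        simp only [hb, slag_zero α hα x]
        field_simp
      | one =>
        intro _
        have e1 := slag_rec_zero α hα x
        have key : (α+1) * a 1 = (α+1) * b 1 := by
          simp only [hb]
          linear_combination h0 - (a 0 * Real.Gamma (α+1)) * e1 - ((α+1-x) * a 0) * hΓ0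
        exact mul_left_cancel₀ hα1 key
      | more n ih1 ih2 =>
        intro hn
        have han : a n = b n := ih1 (by omega)
        have han1 : a (n+1) = b (n+1) := ih2 (by omega)
        have hr := hrec (n+1) (by omega) (by omega)
        push_cast at hr
        have hs := slag_rec α hα n x
        have hbs : b n - (2*((n:ℝ)+1)+α+1-x) * b (n+1)
            + (((n:ℝ)+1)+1)*(((n:ℝ)+1)+α+1) * b (n+2) = 0 := by
          simp only [hb]
          linear_combination (a 0 * Real.Gamma (α+1)) * hs
        have hd : (((n:ℝ)+1)+1)*(((n:ℝ)+1)+α+1) ≠ 0 := by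
          have h := Nat.cast_nonneg (α := ℝ) n
          have : (0:ℝ) < (((n:ℝ)+1)+1)*(((n:ℝ)+1)+α+1) := by nlinarith
          exact this.ne'
        have hz2 : (((n:ℝ)+1)+1)*(((n:ℝ)+1)+α+1) * (a (n+2) - b (n+2)) = 0 := by
          rw [han, han1] at hr
          linear_combination hr - hbs
        have := (mul_eq_zero.mp hz2).resolve_left hd
        linarith
    constructor
    · exact fun j hj => hall j (by omega)
    · rintro ⟨j, hj, hja⟩
      have hz := hall (κ+1) le_rfl
      rw [hend] at hz
      have ha0 : a 0 ≠ 0 := by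
        intro h
        apply hja
        rw [hall j (by omega), hb]
        simp [h]
      rcases mul_eq_zero.mp hz.symm with h | h
      · exact absurd (mul_eq_zero.mp h) (by push_neg; exact ⟨ha0, hG⟩)
      · exact h
  · intro hz
    refine ⟨fun j => Real.Gamma (α+1) * slag α j x, ⟨?_, ?_, ?_⟩, 0, Nat.zero_le _, ?_⟩
    · dsimp only
      have e1 := slag_rec_zero α hα x
      linear_combination Real.Gamma (α+1) * e1
    · intro j hj1 hjκ
      obtain ⟨m, rfl⟩ : ∃ m, j = m + 1 := ⟨j - 1, by omega⟩
      simp only [Nat.add_sub_cancel]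
      have hs := slag_rec α hα m x
      push_cast
      linear_combination Real.Gamma (α+1) * hs
    · dsimp only
      rw [hz, mul_zero]
    · dsimp only
      rw [slag_zero α hα x]
      field_simp
      exact one_ne_zero
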